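/- Let G : ℍ → ℂ be holomorphic and satisfy G((aτ+b)/(cτ+d)) = (cτ+d)²·G(τ) for every (a,b;c,d) ∈ Γ₀(4). Suppose there are integers n₁, n₂, n₃ and coefficients A, B, C : ℤ → ℂ such that for all τ ∈ ℍ: G(τ) = Σ_{n≥n₁} A(n)·e^{2πinτ}, τ^{−2}·G(−1/τ) = Σ_{n≥n₂} B(n)·e^{2πinτ/4}, and (2τ+1)^{−2}·G(τ/(2τ+1)) = Σ_{n≥n₃} C(n)·e^{2πinτ}, each series converging absolutely and uniformly on {τ : Im τ ≥ y₀} for every y₀ > 0. Then A(0) + 4·B(0) + C(0) = 0. -/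

import Mathlib

open Complex UpperHalfPlane Matrix MatrixGroups CongruenceSubgroup Filter Topology Manifold
open scoped Real

set_option synthInstance.maxHeartbeats 1000000
set_option maxHeartbeats 1000000

noncomputable section

open MeasureTheory intervalIntegral Set

lemma myExistsPrimitive {g : ℂ → ℂ}
    (hg : ∀ z : ℂ, 0 < z.im → DifferentiableAt ℂ g z) :
    ∃ F : ℂ → ℂ, ∀ z : ℂ, 0 < z.im → HasDerivAt F (g z) z := by
  have hgc : ∀ z : ℂ, 0 < z.im → ContinuousAt g z := fun z hz => (hg z hz).continuousAt
  -- horizontal integrability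
  have hint1 : ∀ (a b y : ℝ), 0 < y →
      IntervalIntegrable (fun t : ℝ => g (t + y * Complex.I)) volume a b := by
    intro a b y hy
    apply Continuous.intervalIntegrable
    rw [continuous_iff_continuousAt]
    intro t
    have hc : ContinuousAt (fun t : ℝ => (t : ℂ) + y * Complex.I) t := by fun_prop
    exact (hgc _ (by simp [hy])).comp hc
  -- vertical integrability
  have hint2 : ∀ (x a b : ℝ), 0 < a → 0 < b →
      IntervalIntegrable (fun t : ℝ => g (x + t * Complex.I)) volume a b := by
    intro x a b ha hb
    apply ContinuousOn.intervalIntegrable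
    intro t ht
    rw [Set.uIcc_eq_union] at ht
    have ht' : 0 < t := by
      rcases ht with h | h
      · rcases h with ⟨h1, h2⟩; exact lt_of_lt_of_le ha h1
      · rcases h with ⟨h1, h2⟩; exact lt_of_lt_of_le hb h1
    have hc : ContinuousAt (fun t : ℝ => (x : ℂ) + t * Complex.I) t := by fun_prop
    exact ((hgc _ (by simp [ht'])).comp hc).continuousWithinAt
  -- rectangle lemma
  have hrect : ∀ (x₁ x₂ y₁ y₂ : ℝ), 0 < y₁ → 0 < y₂ →
      (∫ x in x₁..x₂, g (x + y₁ * Complex.I)) - (∫ x in x₁..x₂, g (x + y₂ * Complex.I)) +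
        Complex.I * (∫ y in y₁..y₂, g (x₂ + y * Complex.I)) - Complex.I * ∫ y in y₁..y₂, g (x₁ + y * Complex.I) = 0 := by
    intro x₁ x₂ y₁ y₂ hy₁ hy₂
    have := Complex.integral_boundary_rect_eq_zero_of_differentiableOn g ⟨x₁, y₁⟩ ⟨x₂, y₂⟩ ?_
    · simpa [smul_eq_mul] using this
    · intro u hu
      rw [Complex.mem_reProdIm] at hu
      have h2 := hu.2
      rw [Set.uIcc_eq_union] at h2
      have hu' : 0 < u.im := by
        rcases h2 with h | h
        · exact lt_of_lt_of_le hy₁ h.1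
        · exact lt_of_lt_of_le hy₂ h.1
      exact (hg u hu').differentiableWithinAt
  set F : ℂ → ℂ := fun z =>
    (∫ t in (0:ℝ)..z.re, g (t + (1:ℝ) * Complex.I)) + Complex.I * ∫ t in (1:ℝ)..z.im, g (z.re + t * Complex.I) with hFdef
  -- difference formula
  have hdiff : ∀ z w : ℂ, 0 < z.im → 0 < w.im →
      F w - F z = (∫ t in z.re..w.re, g (t + z.im * Complex.I)) +
        Complex.I * ∫ t in z.im..w.im, g (w.re + t * Complex.I) := by
    intro z w hz hw
    have e1 : (∫ t in (0:ℝ)..w.re, g (t + (1:ℝ) * Complex.I)) - ∫ t in (0:ℝ)..z.re, g (t + (1:ℝ) * Complex.I)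
        = ∫ t in z.re..w.re, g (t + (1:ℝ) * Complex.I) :=
      intervalIntegral.integral_interval_sub_left (hint1 _ _ _ one_pos) (hint1 _ _ _ one_pos)
    have e2 : (∫ t in (1:ℝ)..z.im, g (w.re + t * Complex.I)) + ∫ t in z.im..w.im, g (w.re + t * Complex.I)
        = ∫ t in (1:ℝ)..w.im, g (w.re + t * Complex.I) :=
      intervalIntegral.integral_add_adjacent_intervals (hint2 _ _ _ one_pos hz)
        (hint2 _ _ _ hz hw)
    have e3 := hrect z.re w.re 1 z.im one_pos hz
    simp only [hFdef]
    linear_combination e1 - Complex.I * e2 + e3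
  refine ⟨F, fun z hz => ?_⟩
  rw [hasDerivAt_iff_isLittleO, Asymptotics.isLittleO_iff]
  intro ε hε
  have hc := hgc z hz
  rw [Metric.continuousAt_iff] at hc
  obtain ⟨δ, hδ, hball⟩ := hc (ε / 2) (by positivity)
  have hev : ∀ᶠ w in nhds z, ‖w - z‖ < min (δ / 2) (z.im / 2) := by
    have hmem := Metric.ball_mem_nhds z (show (0:ℝ) < min (δ / 2) (z.im / 2) by positivity)
    filter_upwards [hmem] with w hw
    simpa [Metric.mem_ball, dist_eq_norm] using hw
  filter_upwards [hev] with w hw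
  have hre : |(w - z).re| ≤ ‖w - z‖ := by
    exact Complex.abs_re_le_norm _
  have him : |(w - z).im| ≤ ‖w - z‖ := by
    exact Complex.abs_im_le_norm _
  have hwd2 : ‖w - z‖ < δ / 2 := lt_of_lt_of_le hw (min_le_left _ _)
  have hwz2 : ‖w - z‖ < z.im / 2 := lt_of_lt_of_le hw (min_le_right _ _)
  have him' : |w.im - z.im| < z.im / 2 := by
    rw [← Complex.sub_im]; exact lt_of_le_of_lt him hwz2
  have hre' : |w.re - z.re| < δ / 2 := by
    rw [← Complex.sub_re]; exact lt_of_le_of_lt hre hwd2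
  have him'' : |w.im - z.im| < δ / 2 := by
    rw [← Complex.sub_im]; exact lt_of_le_of_lt him (lt_of_lt_of_le hw (min_le_left _ _))
  have hwim : 0 < w.im := by
    rcases abs_lt.mp him' with ⟨h1, h2⟩; linarith
  rw [hdiff z w hz hwim]
  have hconst : (w - z) * g z = (∫ t in z.re..w.re, g z) + Complex.I * ∫ t in z.im..w.im, g z := by
    rw [intervalIntegral.integral_const, intervalIntegral.integral_const, Complex.real_smul,
      Complex.real_smul, ← Complex.re_add_im (w - z)]
    push_cast [Complex.sub_re, Complex.sub_im]
    ring
  have hs1 : (∫ t in z.re..w.re, (g (↑t + ↑z.im * Complex.I) - g z)) =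
      (∫ t in z.re..w.re, g (↑t + ↑z.im * Complex.I)) - ∫ t in z.re..w.re, (g z : ℂ) :=
    intervalIntegral.integral_sub (hint1 _ _ _ hz) intervalIntegrable_const
  have hs2 : (∫ t in z.im..w.im, (g (↑w.re + ↑t * Complex.I) - g z)) =
      (∫ t in z.im..w.im, g (↑w.re + ↑t * Complex.I)) - ∫ t in z.im..w.im, (g z : ℂ) :=
    intervalIntegral.integral_sub (hint2 _ _ _ hz hwim) intervalIntegrable_const
  have hEq : (∫ t in z.re..w.re, g (↑t + ↑z.im * Complex.I)) +
      Complex.I * (∫ t in z.im..w.im, g (↑w.re + ↑t * Complex.I)) - (w - z) • g z =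
      (∫ t in z.re..w.re, (g (↑t + ↑z.im * Complex.I) - g z)) +
      Complex.I * (∫ t in z.im..w.im, (g (↑w.re + ↑t * Complex.I) - g z)) := by
    rw [smul_eq_mul]
    linear_combination -hconst - hs1 - Complex.I * hs2
  rw [hEq]
  have hb1 : ‖∫ t in z.re..w.re, (g (↑t + ↑z.im * Complex.I) - g z)‖ ≤ ε / 2 * |w.re - z.re| := by
    apply intervalIntegral.norm_integral_le_of_norm_le_const
    intro t ht
    have habs : |t - z.re| ≤ |w.re - z.re| := by
      have h1 := le_abs_self (w.re - z.re); have h2 := neg_abs_le (w.re - z.re)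
      rcases Set.mem_uIoc.mp ht with h | h <;> rw [abs_le] <;>
        exact ⟨by linarith [h.1, h.2], by linarith [h.1, h.2]⟩
    have hdist : dist (↑t + ↑z.im * Complex.I) z < δ := by
      have hsub : (↑t + ↑z.im * Complex.I) - z = ((t - z.re : ℝ) : ℂ) := by
        rw [Complex.ext_iff]; simp
      rw [Complex.dist_eq, hsub, Complex.norm_real, Real.norm_eq_abs]
      calc |t - z.re| ≤ |w.re - z.re| := habs
        _ < δ / 2 := hre'
        _ < δ := by linarith
    have := hball hdist
    rw [Complex.dist_eq] at this
    exact le_of_lt (lt_of_lt_of_le this (by linarith [le_abs_self (ε/2)]))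
  have hb2 : ‖∫ t in z.im..w.im, (g (↑w.re + ↑t * Complex.I) - g z)‖ ≤ ε / 2 * |w.im - z.im| := by
    apply intervalIntegral.norm_integral_le_of_norm_le_const
    intro t ht
    have habs : |t - z.im| ≤ |w.im - z.im| := by
      have h1 := le_abs_self (w.im - z.im); have h2 := neg_abs_le (w.im - z.im)
      rcases Set.mem_uIoc.mp ht with h | h <;> rw [abs_le] <;>
        exact ⟨by linarith [h.1, h.2], by linarith [h.1, h.2]⟩
    have hdist : dist (↑w.re + ↑t * Complex.I) z < δ := by
      have hsub : (↑w.re + ↑t * Complex.I) - z = ((w.re - z.re : ℝ) : ℂ) + ((t - z.im : ℝ) : ℂ) * Complex.I := by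
        rw [Complex.ext_iff]; simp
      rw [Complex.dist_eq, hsub]
      calc ‖((w.re - z.re : ℝ) : ℂ) + ((t - z.im : ℝ) : ℂ) * Complex.I‖
          ≤ ‖((w.re - z.re : ℝ) : ℂ)‖ + ‖((t - z.im : ℝ) : ℂ) * Complex.I‖ :=
            norm_add_le _ _
        _ = |w.re - z.re| + |t - z.im| := by
            rw [norm_mul, Complex.norm_I, mul_one, Complex.norm_real, Complex.norm_real, Real.norm_eq_abs, Real.norm_eq_abs]
        _ ≤ |w.re - z.re| + |w.im - z.im| := by linarith
        _ < δ := by linarith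
    have := hball hdist
    rw [Complex.dist_eq] at this
    exact le_of_lt this
  calc ‖(∫ t in z.re..w.re, (g (↑t + ↑z.im * Complex.I) - g z)) +
      Complex.I * (∫ t in z.im..w.im, (g (↑w.re + ↑t * Complex.I) - g z))‖
      ≤ ‖∫ t in z.re..w.re, (g (↑t + ↑z.im * Complex.I) - g z)‖ +
        ‖Complex.I * (∫ t in z.im..w.im, (g (↑w.re + ↑t * Complex.I) - g z))‖ := norm_add_le _ _
    _ = ‖∫ t in z.re..w.re, (g (↑t + ↑z.im * Complex.I) - g z)‖ +
        ‖∫ t in z.im..w.im, (g (↑w.re + ↑t * Complex.I) - g z)‖ := by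
          rw [norm_mul, Complex.norm_I, one_mul]
    _ ≤ ε / 2 * |w.re - z.re| + ε / 2 * |w.im - z.im| := add_le_add hb1 hb2
    _ ≤ ε / 2 * ‖w - z‖ + ε / 2 * ‖w - z‖ := by
          have h1 : |w.re - z.re| ≤ ‖w - z‖ := by rw [← Complex.sub_re]; exact hre
          have h2 : |w.im - z.im| ≤ ‖w - z‖ := by rw [← Complex.sub_im]; exact him
          have := le_of_lt hε
          gcongr
    _ = ε * ‖w - z‖ := by ring


lemma myTendstoIntegral {ι : Type*} {l : Filter ι} {F : ι → ℝ → ℂ} {f : ℝ → ℂ} {a b : ℝ}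
    (hF : ∀ i, IntervalIntegrable (F i) volume a b)
    (hf : IntervalIntegrable f volume a b)
    (h : TendstoUniformlyOn F f l (Set.uIcc a b)) :
    Tendsto (fun i => ∫ x in a..b, F i x) l (𝓝 (∫ x in a..b, f x)) := by
  rw [Metric.tendsto_nhds]
  intro ε hε
  have hε' : 0 < ε / (|b - a| + 1) := by positivity
  rw [Metric.tendstoUniformlyOn_iff] at h
  filter_upwards [h _ hε'] with i hi
  have hsub : ‖(∫ x in a..b, F i x) - ∫ x in a..b, f x‖ ≤ (ε / (|b - a| + 1)) * |b - a| := by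
    rw [← intervalIntegral.integral_sub (hF i) hf]
    apply intervalIntegral.norm_integral_le_of_norm_le_const
    intro x hx
    have := hi x (Set.Ioc_subset_Icc_self hx)
    rw [dist_comm, dist_eq_norm] at this
    exact this.le
  rw [dist_eq_norm]
  have hlt : (ε / (|b - a| + 1)) * |b - a| < ε := by
    rw [div_mul_eq_mul_div, div_lt_iff₀ (by positivity)]
    nlinarith [abs_nonneg (b - a)]
  exact lt_of_le_of_lt hsub hlt


lemma mySumEval {c : ℤ → ℂ} {k a : ℝ} (hk : 0 < k) {φ : ℝ → ℂ}
    (hφ : IntervalIntegrable φ volume a (a + k))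
    (hU : TendstoUniformlyOn
      (fun (s : Finset ℤ) (x : ℝ) =>
        ∑ n ∈ s, c n * Complex.exp (2 * Real.pi * Complex.I * n * (x + Complex.I) / k))
      φ atTop (Set.uIcc a (a + k))) :
    ∫ x in a..(a + k), φ x = k * c 0 := by
  have hcont : ∀ n : ℤ, Continuous fun x : ℝ =>
      c n * Complex.exp (2 * Real.pi * Complex.I * n * (x + Complex.I) / k) := by
    intro n
    fun_prop
  have hFint : ∀ s : Finset ℤ, IntervalIntegrable
      (fun x : ℝ => ∑ n ∈ s, c n * Complex.exp (2 * Real.pi * Complex.I * n * (x + Complex.I) / k))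
      volume a (a + k) :=
    fun s => (continuous_finset_sum s fun n _ => hcont n).intervalIntegrable _ _
  have h1 := myTendstoIntegral hFint hφ hU
  have hkC : (k : ℂ) ≠ 0 := by exact_mod_cast hk.ne'
  have h2 : ∀ᶠ s : Finset ℤ in atTop,
      (∫ x in a..(a + k), ∑ n ∈ s,
        c n * Complex.exp (2 * Real.pi * Complex.I * n * (x + Complex.I) / k)) = k * c 0 := by
    rw [eventually_atTop]
    refine ⟨{0}, fun s hs => ?_⟩
    rw [intervalIntegral.integral_finset_sum (fun n _ => ((hcont n).intervalIntegrable _ _))]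
    rw [← Finset.sum_subset hs (fun n hns hn0 => ?_)]
    · rw [Finset.sum_singleton]
      simp only [Int.cast_zero, mul_zero, zero_mul, zero_div, Complex.exp_zero, mul_one]
      rw [intervalIntegral.integral_const, Complex.real_smul]
      push_cast
      ring
    · -- n ≠ 0 term has zero integral
      have hn : (n : ℤ) ≠ 0 := by simpa using hn0
      rw [intervalIntegral.integral_const_mul]
      have hnC : (n : ℂ) ≠ 0 := Int.cast_ne_zero.mpr hn
      have hc0 : (2 * (Real.pi : ℂ) * Complex.I * n / k) ≠ 0 := by
        apply div_ne_zero _ hkC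
        simp [Real.pi_ne_zero, Complex.I_ne_zero, hnC]
      set cc : ℂ := 2 * (Real.pi : ℂ) * Complex.I * n / k with hcc
      have hrw : ∀ x : ℝ, (2 * (Real.pi : ℂ) * Complex.I * n * ((x : ℂ) + Complex.I) / k)
          = cc * Complex.I + cc * x := by
        intro x
        rw [hcc]
        field_simp
        ring
      have : (∫ x in a..(a + k), Complex.exp (2 * Real.pi * Complex.I * n * (x + Complex.I) / k))
          = Complex.exp (cc * Complex.I) * ∫ x in a..(a + k), Complex.exp (cc * x) := by
        rw [← intervalIntegral.integral_const_mul]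
        apply intervalIntegral.integral_congr
        intro x _
        show Complex.exp _ = _
        rw [hrw x, Complex.exp_add]
      rw [this, integral_exp_mul_complex hc0]
      have hck : cc * (k : ℂ) = n * (2 * Real.pi * Complex.I) := by
        rw [hcc]; field_simp
      have hexp : Complex.exp (cc * (a + k : ℝ)) = Complex.exp (cc * a) := by
        push_cast
        rw [mul_add, Complex.exp_add, hck, Complex.exp_int_mul_two_pi_mul_I, mul_one]
      rw [hexp]
      simp
  exact tendsto_nhds_unique h1 (Tendsto.congr' (h2.mono fun s hs => hs.symm) tendsto_const_nhds)


/-- The matrix `(1, 0; 2, 1) ∈ SL₂(ℤ)`, taking `∞` to the cusp `1/2` of `Γ₀(4)`. -/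
def Vmat : SL(2, ℤ) := ⟨!![1, 0; 2, 1], by norm_num [Matrix.det_fin_two_of]⟩

/-- If `G` is holomorphic on `ℍ`, transforms with weight `2` under `Γ₀(4)`,
and has expansions `G(τ) = Σ A(n)e^{2πinτ}`, `τ^{−2}G(−1/τ) = Σ B(n)e^{2πinτ/4}` and
`(2τ+1)^{−2}G(τ/(2τ+1)) = Σ C(n)e^{2πinτ}` (each converging absolutely, and uniformly on
`Im τ ≥ y₀` for every `y₀ > 0`), then `A(0) + 4·B(0) + C(0) = 0`. -/
theorem statement6
    (G : ℍ → ℂ) (hol : MDifferentiable 𝓘(ℂ) 𝓘(ℂ) G)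
    (transf : ∀ γ ∈ Gamma0 4, ∀ τ : ℍ,
      G (γ • τ) = ((γ 1 0 : ℂ) * (τ : ℂ) + (γ 1 1 : ℂ)) ^ 2 * G τ)
    (n₁ n₂ n₃ : ℤ) (A B C : ℤ → ℂ)
    (hA : ∀ n : ℤ, n < n₁ → A n = 0)
    (hB : ∀ n : ℤ, n < n₂ → B n = 0)
    (hC : ∀ n : ℤ, n < n₃ → C n = 0)
    (hAabs : ∀ τ : ℍ,
      Summable fun n : ℤ => ‖A n * Complex.exp (2 * Real.pi * Complex.I * n * τ)‖)
    (hBabs : ∀ τ : ℍ,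
      Summable fun n : ℤ => ‖B n * Complex.exp (2 * Real.pi * Complex.I * n * τ / 4)‖)
    (hCabs : ∀ τ : ℍ,
      Summable fun n : ℤ => ‖C n * Complex.exp (2 * Real.pi * Complex.I * n * τ)‖)
    (hAexp : ∀ y₀ : ℝ, 0 < y₀ →
      TendstoUniformlyOn
        (fun (s : Finset ℤ) (τ : ℍ) => ∑ n ∈ s, A n * Complex.exp (2 * Real.pi * Complex.I * n * τ))
        (fun τ => G τ) Filter.atTop {τ : ℍ | y₀ ≤ τ.im})
    (hBexp : ∀ y₀ : ℝ, 0 < y₀ →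
      TendstoUniformlyOn
        (fun (s : Finset ℤ) (τ : ℍ) =>
          ∑ n ∈ s, B n * Complex.exp (2 * Real.pi * Complex.I * n * τ / 4))
        (fun τ => (((τ : ℂ)) ^ 2)⁻¹ * G (ModularGroup.S • τ)) Filter.atTop {τ : ℍ | y₀ ≤ τ.im})
    (hCexp : ∀ y₀ : ℝ, 0 < y₀ →
      TendstoUniformlyOn
        (fun (s : Finset ℤ) (τ : ℍ) =>
          ∑ n ∈ s, C n * Complex.exp (2 * Real.pi * Complex.I * n * τ))
        (fun τ => ((2 * (τ : ℂ) + 1) ^ 2)⁻¹ * G (Vmat • τ)) Filter.atTop {τ : ℍ | y₀ ≤ τ.im}) :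
    A 0 + 4 * B 0 + C 0 = 0 := by
  classical
  -- the function on ℂ
  set g : ℂ → ℂ := G ∘ UpperHalfPlane.ofComplex with hgdef
  have hgd : ∀ z : ℂ, 0 < z.im → DifferentiableAt ℂ g z := by
    intro z hz
    exact (UpperHalfPlane.mdifferentiable_iff.mp hol z hz).differentiableAt
      ((isOpen_lt continuous_const Complex.continuous_im).mem_nhds hz)
  obtain ⟨F, hF⟩ := myExistsPrimitive hgd
  -- the horizontal path at height 1
  have him1 : ∀ x : ℝ, ((x:ℂ) + Complex.I).im = 1 := by intro x; simp
  set τx : ℝ → ℍ := fun x => ⟨(x:ℂ) + Complex.I, by rw [him1]; norm_num⟩ with hτxdef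
  have hτx : ∀ x : ℝ, ((τx x : ℍ) : ℂ) = (x:ℂ) + Complex.I := fun _ => rfl
  have hτxim : ∀ x : ℝ, (τx x).im = 1 := fun x => him1 x
  have hgτ : ∀ τ : ℍ, g ((τ : ℍ) : ℂ) = G τ := by
    intro τ
    simp only [hgdef, Function.comp_apply, UpperHalfPlane.ofComplex_apply]
  -- nonvanishing facts
  have hne1 : ∀ x : ℝ, ((x:ℂ) + Complex.I) ≠ 0 := by
    intro x h
    have := congrArg Complex.im h
    rw [him1 x] at this
    simpa using this
  have hne2 : ∀ x : ℝ, (2 * ((x:ℂ) + Complex.I) + 1) ≠ 0 := by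
    intro x h
    have := congrArg Complex.im h
    simp at this
  -- coercion identities for the group actions
  have hS : ∀ x : ℝ, ((ModularGroup.S • τx x : ℍ) : ℂ) = -((x:ℂ) + Complex.I)⁻¹ := by
    intro x
    rw [UpperHalfPlane.modular_S_smul]
    exact inv_neg
  have hV : ∀ x : ℝ, ((Vmat • τx x : ℍ) : ℂ)
      = ((x:ℂ) + Complex.I) / (2 * ((x:ℂ) + Complex.I) + 1) := by
    intro x
    rw [UpperHalfPlane.specialLinearGroup_apply]
    simp [Vmat, hτx]
  have hTmem : ModularGroup.T ∈ Gamma0 4 := by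
    rw [CongruenceSubgroup.Gamma0_mem]
    simp [ModularGroup.T]
  have hGT : ∀ σ : ℍ, G (ModularGroup.T • σ) = G σ := by
    intro σ
    rw [transf _ hTmem σ]
    norm_num [ModularGroup.T]
  have hTc : ∀ σ : ℍ, ((ModularGroup.T • σ : ℍ) : ℂ) = 1 + (σ : ℂ) := by
    intro σ
    rw [UpperHalfPlane.modular_T_smul]
    simp [UpperHalfPlane.coe_vadd]
  -- positivity of imaginary parts along the transformed paths
  have himS : ∀ x : ℝ, 0 < (-((x:ℂ) + Complex.I)⁻¹).im := by
    intro x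
    rw [← hS x]
    exact (ModularGroup.S • τx x).2
  have himT : ∀ x : ℝ, 0 < (1 + -((x:ℂ) + Complex.I)⁻¹).im := by
    intro x
    have : (1 + -((x:ℂ) + Complex.I)⁻¹) = ((ModularGroup.T • (ModularGroup.S • τx x) : ℍ) : ℂ) := by
      rw [hTc, hS]
    rw [this]
    exact (ModularGroup.T • (ModularGroup.S • τx x)).2
  have himV : ∀ x : ℝ, 0 < (((x:ℂ) + Complex.I) / (2 * ((x:ℂ) + Complex.I) + 1)).im := by
    intro x
    rw [← hV x]
    exact (Vmat • τx x).2
  -- the three limit functions, composed with the path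
  set φA : ℝ → ℂ := fun x => G (τx x) with hφAdef
  set φB : ℝ → ℂ := fun x => ((((τx x : ℍ) : ℂ)) ^ 2)⁻¹ * G (ModularGroup.S • τx x) with hφBdef
  set φC : ℝ → ℂ := fun x => ((2 * ((τx x : ℍ) : ℂ) + 1) ^ 2)⁻¹ * G (Vmat • τx x) with hφCdef
  have hφA_eq : φA = fun x : ℝ => g ((x:ℂ) + Complex.I) := by
    funext x
    rw [hφAdef, ← hτx x, hgτ]
  have hφB_eq : φB = fun x : ℝ => (((x:ℂ) + Complex.I) ^ 2)⁻¹ * g (-((x:ℂ) + Complex.I)⁻¹) := by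
    funext x
    show ((((τx x : ℍ) : ℂ)) ^ 2)⁻¹ * G (ModularGroup.S • τx x) = _
    rw [← hS x, hgτ, hτx]
  have hφC_eq : φC = fun x : ℝ =>
      ((2 * ((x:ℂ) + Complex.I) + 1) ^ 2)⁻¹
        * g (((x:ℂ) + Complex.I) / (2 * ((x:ℂ) + Complex.I) + 1)) := by
    funext x
    show ((2 * ((τx x : ℍ) : ℂ) + 1) ^ 2)⁻¹ * G (Vmat • τx x) = _
    rw [← hV x, hgτ, hτx]
  -- continuity
  have hG_cont : ∀ (p : ℝ → ℂ), Continuous p → (∀ x, 0 < (p x).im) →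
      Continuous fun x => g (p x) := by
    intro p hp hip
    rw [continuous_iff_continuousAt]
    intro x
    exact ((hgd _ (hip x)).continuousAt).comp hp.continuousAt
  have hc1 : Continuous fun x : ℝ => ((x:ℂ) + Complex.I) := by fun_prop
  have hcA : Continuous φA := by
    rw [hφA_eq]
    exact hG_cont _ hc1 (fun x => by rw [him1]; norm_num)
  have hcB : Continuous φB := by
    rw [hφB_eq]
    exact ((hc1.pow 2).inv₀ fun x => pow_ne_zero _ (hne1 x)).mul
      (hG_cont _ ((hc1.inv₀ hne1).neg) himS)
  have hcC : Continuous φC := by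
    rw [hφC_eq]
    have hc2 : Continuous fun x : ℝ => (2 * ((x:ℂ) + Complex.I) + 1) := by fun_prop
    exact ((hc2.pow 2).inv₀ fun x => pow_ne_zero _ (hne2 x)).mul
      (hG_cont _ (hc1.div hc2 hne2) himV)
  have hiA : ∀ a b : ℝ, IntervalIntegrable φA volume a b := fun a b => hcA.intervalIntegrable a b
  have hiB : ∀ a b : ℝ, IntervalIntegrable φB volume a b := fun a b => hcB.intervalIntegrable a b
  have hiC : ∀ a b : ℝ, IntervalIntegrable φC volume a b := fun a b => hcC.intervalIntegrable a b
  -- endpoint identities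
  have e0' : -((((0:ℝ)):ℂ) + Complex.I)⁻¹ = Complex.I := by
    push_cast
    rw [zero_add, Complex.inv_I, neg_neg]
  have e2' : -((((-2:ℝ)):ℂ) + Complex.I)⁻¹ = (2 + Complex.I)/5 := by
    have h0 : ((-2:ℂ) + Complex.I) ≠ 0 := by intro h; simpa using congrArg Complex.im h
    push_cast
    field_simp
    linear_combination -Complex.I_sq
  have e3' : ((((0:ℝ)):ℂ) + Complex.I)/(2*((((0:ℝ)):ℂ) + Complex.I)+1) = (2 + Complex.I)/5 := by
    push_cast
    rw [zero_add]
    rw [div_eq_div_iff (by intro h; simpa using congrArg Complex.im h) (by norm_num : (5:ℂ) ≠ 0)]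
    linear_combination (-2:ℂ) * Complex.I_sq
  have e4' : ((((-1:ℝ)):ℂ) + Complex.I)/(2*((((-1:ℝ)):ℂ) + Complex.I)+1) = (3 + Complex.I)/5 := by
    have h0 : (2*((-1:ℂ) + Complex.I)+1) ≠ 0 := by intro h; simpa using congrArg Complex.im h
    push_cast
    rw [div_eq_div_iff h0 (by norm_num : (5:ℂ) ≠ 0)]
    linear_combination (-2:ℂ) * Complex.I_sq
  have e5' : 1 + -((((2:ℝ)):ℂ) + Complex.I)⁻¹ = (3 + Complex.I)/5 := by
    have h0 : ((2:ℂ) + Complex.I) ≠ 0 := by intro h; simpa using congrArg Complex.im h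
    push_cast
    field_simp
    linear_combination (-1:ℂ) * Complex.I_sq
  have e6' : 1 + -((((0:ℝ)):ℂ) + Complex.I)⁻¹ = 1 + Complex.I := by
    push_cast
    rw [zero_add, Complex.inv_I, neg_neg]
  -- derivatives of the path maps
  have hdB : ∀ x : ℝ, HasDerivAt (fun z : ℂ => -(z + Complex.I)⁻¹)
      ((((x:ℂ) + Complex.I) ^ 2)⁻¹) ((x:ℂ)) := by
    intro x
    have h0 : HasDerivAt (fun z : ℂ => z + Complex.I) 1 (x:ℂ) := (hasDerivAt_id _).add_const _
    have h1 := (h0.inv (hne1 x)).neg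
    exact h1.congr_deriv (by ring)
  have hdC : ∀ x : ℝ, HasDerivAt (fun z : ℂ => (z + Complex.I)/(2*(z + Complex.I)+1))
      (((2*((x:ℂ) + Complex.I)+1) ^ 2)⁻¹) ((x:ℂ)) := by
    intro x
    have h0 : HasDerivAt (fun z : ℂ => z + Complex.I) 1 (x:ℂ) := (hasDerivAt_id _).add_const _
    have h2 : HasDerivAt (fun z : ℂ => 2*(z + Complex.I) + 1) 2 (x:ℂ) := by
      simpa using ((h0.const_mul (2:ℂ)).add_const (1:ℂ))
    have h3 := h0.div h2 (hne2 x)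
    exact h3.congr_deriv (by ring)
  have hdT : ∀ x : ℝ, HasDerivAt (fun z : ℂ => 1 + -(z + Complex.I)⁻¹)
      ((((x:ℂ) + Complex.I) ^ 2)⁻¹) ((x:ℂ)) := fun x => (hdB x).const_add 1
  -- the four path integrals
  have hT1 : ∫ x in (0:ℝ)..1, φA x = F (1 + Complex.I) - F Complex.I := by
    have hder : ∀ x ∈ Set.uIcc (0:ℝ) 1,
        HasDerivAt (fun t : ℝ => F ((t:ℂ) + Complex.I)) (φA x) x := by
      intro x _
      have h0 : HasDerivAt (fun z : ℂ => z + Complex.I) 1 (x:ℂ) := (hasDerivAt_id _).add_const _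
      have h1 := ((hF ((x:ℂ) + Complex.I) (by rw [him1]; norm_num)).comp ((x:ℂ)) h0).comp_ofReal
      simpa [hφA_eq, Function.comp] using h1
    have := intervalIntegral.integral_eq_sub_of_hasDerivAt hder (hiA 0 1)
    simpa using this
  have hT2 : ∫ x in (0:ℝ)..(-2), φB x = F ((2 + Complex.I)/5) - F Complex.I := by
    have hder : ∀ x ∈ Set.uIcc (0:ℝ) (-2),
        HasDerivAt (fun t : ℝ => F (-(((t:ℂ)) + Complex.I)⁻¹)) (φB x) x := by
      intro x _
      have h1 := ((hF (-(((x:ℂ)) + Complex.I)⁻¹) (himS x)).comp ((x:ℂ)) (hdB x)).comp_ofReal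
      simpa [hφB_eq, Function.comp, mul_comm] using h1
    have := intervalIntegral.integral_eq_sub_of_hasDerivAt hder (hiB 0 (-2))
    rw [this, e2', e0']
  have hT3 : ∫ x in (2:ℝ)..0, φB x = F (1 + Complex.I) - F ((3 + Complex.I)/5) := by
    have hder : ∀ x ∈ Set.uIcc (2:ℝ) 0,
        HasDerivAt (fun t : ℝ => F (1 + -(((t:ℂ)) + Complex.I)⁻¹)) (φB x) x := by
      intro x _
      have h1 := ((hF (1 + -(((x:ℂ)) + Complex.I)⁻¹) (himT x)).comp ((x:ℂ)) (hdT x)).comp_ofReal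
      have hg1 : g (1 + -((x:ℂ) + Complex.I)⁻¹) = g (-((x:ℂ) + Complex.I)⁻¹) := by
        have h2 : (1 + -((x:ℂ) + Complex.I)⁻¹)
            = ((ModularGroup.T • (ModularGroup.S • τx x) : ℍ) : ℂ) := by
          rw [hTc, hS]
        rw [h2, hgτ, hGT, ← hS x, hgτ]
      simpa [hφB_eq, hg1, mul_comm] using h1
    have := intervalIntegral.integral_eq_sub_of_hasDerivAt hder (hiB 2 0)
    rw [this, e5', e6']
  have hT4 : ∫ x in (0:ℝ)..(-1), φC x = F ((3 + Complex.I)/5) - F ((2 + Complex.I)/5) := by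
    have hder : ∀ x ∈ Set.uIcc (0:ℝ) (-1),
        HasDerivAt (fun t : ℝ => F ((((t:ℂ)) + Complex.I)/(2*(((t:ℂ)) + Complex.I)+1))) (φC x) x := by
      intro x _
      have h1 := ((hF ((((x:ℂ)) + Complex.I)/(2*(((x:ℂ)) + Complex.I)+1)) (himV x)).comp
        ((x:ℂ)) (hdC x)).comp_ofReal
      simpa [hφC_eq, Function.comp, mul_comm] using h1
    have := intervalIntegral.integral_eq_sub_of_hasDerivAt hder (hiC 0 (-1))
    rw [this, e4', e3']
  -- evaluation of the integrals via the uniformly convergent expansions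
  have hEA : ∫ x in (0:ℝ)..((0:ℝ) + 1), φA x = (1:ℝ) * A 0 := by
    apply mySumEval one_pos (hiA _ _)
    have h := (hAexp 1 one_pos).comp τx
    apply TendstoUniformlyOn.congr (h.mono ?_) ?_
    · intro x _
      show (1:ℝ) ≤ (τx x).im
      rw [hτxim]
    · refine Filter.Eventually.of_forall (fun s => fun x _ => ?_)
      show ∑ n ∈ s, A n * Complex.exp (2 * Real.pi * Complex.I * n * ((τx x : ℍ) : ℂ)) = _
      refine Finset.sum_congr rfl (fun n _ => ?_)
      rw [hτx]
      norm_num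
  have hEB : ∫ x in (-2:ℝ)..((-2:ℝ) + 4), φB x = (4:ℝ) * B 0 := by
    apply mySumEval (by norm_num : (0:ℝ) < 4) (hiB _ _)
    have h := (hBexp 1 one_pos).comp τx
    apply TendstoUniformlyOn.congr (h.mono ?_) ?_
    · intro x _
      show (1:ℝ) ≤ (τx x).im
      rw [hτxim]
    · refine Filter.Eventually.of_forall (fun s => fun x _ => ?_)
      show ∑ n ∈ s, B n * Complex.exp (2 * Real.pi * Complex.I * n * ((τx x : ℍ) : ℂ) / 4) = _
      refine Finset.sum_congr rfl (fun n _ => ?_)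
      rw [hτx]
      norm_num
  have hEC : ∫ x in (-1:ℝ)..((-1:ℝ) + 1), φC x = (1:ℝ) * C 0 := by
    apply mySumEval one_pos (hiC _ _)
    have h := (hCexp 1 one_pos).comp τx
    apply TendstoUniformlyOn.congr (h.mono ?_) ?_
    · intro x _
      show (1:ℝ) ≤ (τx x).im
      rw [hτxim]
    · refine Filter.Eventually.of_forall (fun s => fun x _ => ?_)
      show ∑ n ∈ s, C n * Complex.exp (2 * Real.pi * Complex.I * n * ((τx x : ℍ) : ℂ)) = _
      refine Finset.sum_congr rfl (fun n _ => ?_)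
      rw [hτx]
      norm_num
  rw [show ((0:ℝ) + 1) = 1 by norm_num] at hEA
  rw [show ((-2:ℝ) + 4) = 2 by norm_num] at hEB
  rw [show ((-1:ℝ) + 1) = 0 by norm_num] at hEC
  have hEA' : ∫ x in (0:ℝ)..1, φA x = A 0 := by rw [hEA]; norm_num
  have hEB' : ∫ x in (-2:ℝ)..2, φB x = 4 * B 0 := by rw [hEB]; norm_num
  have hEC' : ∫ x in (-1:ℝ)..0, φC x = C 0 := by rw [hEC]; norm_num
  have hsplit : (∫ x in (-2:ℝ)..0, φB x) + (∫ x in (0:ℝ)..2, φB x) = ∫ x in (-2:ℝ)..2, φB x :=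
    intervalIntegral.integral_add_adjacent_intervals (hiB _ _) (hiB _ _)
  have hsym1 : ∫ x in (0:ℝ)..(-2:ℝ), φB x = -∫ x in (-2:ℝ)..0, φB x :=
    intervalIntegral.integral_symm _ _
  have hsym2 : ∫ x in (2:ℝ)..(0:ℝ), φB x = -∫ x in (0:ℝ)..2, φB x :=
    intervalIntegral.integral_symm _ _
  have hsym3 : ∫ x in (0:ℝ)..(-1:ℝ), φC x = -∫ x in (-1:ℝ)..0, φC x :=
    intervalIntegral.integral_symm _ _
  linear_combination -hEA' + hT1 - hT2 - hT3 - hT4 + hsym1 + hsym2 + hsym3 - hsplit - hEB' - hEC'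

end
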